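/- Let G be a finite undirected graph, (L,R) disjoint vertex subsets with U = L ∪ R of positive volume, and suppose β(L,R) = (2e(L) + 2e(R) + e(U,Ū)) / vol(U) ≤ θ. Then with ψ_U as above and 𝓛 the normalized Laplacian, ψ_U 𝓛 ψ_Uᵀ ≥ 2 - 2θ. -/

import Mathlib

open Finset Matrix

/-- If the bipartiteness ratio of `(L,R)` is at most `θ`, then the Rayleigh
quotient of the normalized Laplacian at `ψ_U` is at least `2 - 2θ`. -/
theorem rayleigh_lap_ge_of_bipartiteness_ratio_le {V : Type*} [Fintype V] [DecidableEq V]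
    (A : Matrix V V ℝ) (hA : A.IsSymm) (hA0 : ∀ v u, 0 ≤ A v u)
    (d : V → ℝ) (hd : ∀ v, d v = ∑ u, A v u) (hd0 : ∀ v, 0 < d v)
    (L R : Finset V) (hLR : Disjoint L R) (U : Finset V) (hU : U = L ∪ R)
    (volU : ℝ) (hvolU : volU = ∑ v ∈ U, d v) (hvolU0 : 0 < volU)
    (eL eR eOut : ℝ)
    (heL : eL = (∑ u ∈ L, ∑ v ∈ L, A u v) / 2)
    (heR : eR = (∑ u ∈ R, ∑ v ∈ R, A u v) / 2)
    (heOut : eOut = ∑ u ∈ U, ∑ v ∈ Uᶜ, A u v)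
    (θ : ℝ) (hβ : (2 * eL + 2 * eR + eOut) / volU ≤ θ)
    (ψ : V → ℝ)
    (hψ : ∀ v, ψ v = if v ∈ L then Real.sqrt (d v / volU)
      else if v ∈ R then -Real.sqrt (d v / volU) else 0)
    (𝓛 : Matrix V V ℝ)
    (h𝓛 : ∀ v u, 𝓛 v u = (if v = u then 1 else 0)
      - A v u / (Real.sqrt (d v) * Real.sqrt (d u))) :
    2 - 2 * θ ≤ ψ ᵥ* 𝓛 ⬝ᵥ ψ := by
  classical
  set s : V → ℝ := fun v => if v ∈ L then 1 else if v ∈ R then -1 else 0 with hs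
  have hsq : ∀ v, Real.sqrt (d v) ≠ 0 := fun v =>
    ne_of_gt (Real.sqrt_pos.2 (hd0 v))
  have hvq : Real.sqrt volU ≠ 0 := ne_of_gt (Real.sqrt_pos.2 hvolU0)
  have hvv : Real.sqrt volU * Real.sqrt volU = volU := Real.mul_self_sqrt hvolU0.le
  have hψ' : ∀ v, ψ v = s v * Real.sqrt (d v) / Real.sqrt volU := by
    intro v
    rw [hψ v, Real.sqrt_div (hd0 v).le]
    simp only [hs]
    split_ifs <;> ring
  have hs0 : ∀ v, v ∉ U → s v = 0 := by
    intro v hv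
    rw [hU, Finset.mem_union] at hv
    push_neg at hv
    simp [hs, hv.1, hv.2]
  have hsL : ∀ v, v ∈ L → s v = 1 := by intro v hv; simp [hs, hv]
  have hsR : ∀ v, v ∈ R → s v = -1 := by
    intro v hv
    have : v ∉ L := fun h => (Finset.disjoint_left.mp hLR h) hv
    simp [hs, hv, this]
  -- quadratic form expansion
  have hQ : ψ ᵥ* 𝓛 ⬝ᵥ ψ
      = (∑ v, ψ v * ψ v) - (∑ v, ∑ u, A v u * s v * s u) / volU := by
    have : ψ ᵥ* 𝓛 ⬝ᵥ ψ = ∑ u, ∑ v, ψ v * 𝓛 v u * ψ u := by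
      simp [vecMul, dotProduct, Finset.sum_mul]
    rw [this]
    have hterm : ∀ u v, ψ v * 𝓛 v u * ψ u
        = ψ v * (if v = u then 1 else 0) * ψ u - A v u * s v * s u / volU := by
      intro u v
      rw [h𝓛]
      have key : ψ v * (A v u / (Real.sqrt (d v) * Real.sqrt (d u))) * ψ u
          = A v u * s v * s u / volU := by
        rw [hψ' v, hψ' u]
        field_simp
        rw [Real.sq_sqrt hvolU0.le, div_eq_iff (mul_ne_zero (hsq v) (hsq u))]
        ring
      ring_nf
      ring_nf at key
      linarith [key]
    calc ∑ u, ∑ v, ψ v * 𝓛 v u * ψ u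
        = ∑ u, ∑ v, (ψ v * (if v = u then 1 else 0) * ψ u
            - A v u * s v * s u / volU) := by
          refine Finset.sum_congr rfl fun u _ => Finset.sum_congr rfl fun v _ => hterm u v
      _ = (∑ u, ∑ v, ψ v * (if v = u then 1 else 0) * ψ u)
            - ∑ u, ∑ v, A v u * s v * s u / volU := by
          rw [← Finset.sum_sub_distrib]
          exact Finset.sum_congr rfl fun u _ => Finset.sum_sub_distrib _ _
      _ = (∑ v, ψ v * ψ v) - (∑ v, ∑ u, A v u * s v * s u) / volU := by
          congr 1
          · refine Finset.sum_congr rfl fun u _ => ?_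
            simp [mul_ite, ite_mul]
          · rw [Finset.sum_comm, Finset.sum_div]
            exact Finset.sum_congr rfl fun v _ => (Finset.sum_div _ _ _).symm
  -- sum of squares is 1
  have hsum1 : (∑ v, ψ v * ψ v) = 1 := by
    have h1 : ∀ v ∈ U, ψ v * ψ v = d v / volU := by
      intro v hv
      have hnn : 0 ≤ d v / volU := div_nonneg (hd0 v).le hvolU0.le
      rw [hψ v]
      rw [hU, Finset.mem_union] at hv
      rcases hv with hv | hv
      · simp [hv, Real.mul_self_sqrt hnn]
      · have : v ∉ L := fun h => (Finset.disjoint_left.mp hLR h) hv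
        simp [hv, this, Real.mul_self_sqrt hnn]
    have h0 : ∀ v ∈ (Finset.univ : Finset V), v ∉ U → ψ v * ψ v = 0 := by
      intro v _ hv
      rw [hU, Finset.mem_union] at hv
      push_neg at hv
      rw [hψ v]
      simp [hv.1, hv.2]
    rw [← Finset.sum_subset (Finset.subset_univ U) h0,
      Finset.sum_congr rfl h1, ← Finset.sum_div, ← hvolU, div_self hvolU0.ne']
  -- the A-sum restricted to U
  have hSrestrict : (∑ v, ∑ u, A v u * s v * s u)
      = ∑ v ∈ U, ∑ u ∈ U, A v u * s v * s u := by
    rw [← Finset.sum_subset (Finset.subset_univ U)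
        (fun v _ hv => by simp [hs0 v hv])]
    refine Finset.sum_congr rfl fun v _ => ?_
    rw [← Finset.sum_subset (Finset.subset_univ U)
        (fun u _ hu => by simp [hs0 u hu])]
  have hSLR : ∑ v ∈ R, ∑ u ∈ L, A v u = ∑ v ∈ L, ∑ u ∈ R, A v u := by
    refine Finset.sum_comm.trans ?_
    exact Finset.sum_congr rfl fun v _ => Finset.sum_congr rfl fun u _ => hA.apply v u
  have hSval : (∑ v, ∑ u, A v u * s v * s u)
      = 2 * eL + 2 * eR - 2 * (∑ v ∈ L, ∑ u ∈ R, A v u) := by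
    rw [hSrestrict, hU, Finset.sum_union hLR]
    have hLsplit : ∀ v, (∑ u ∈ L ∪ R, A v u * s v * s u)
        = (∑ u ∈ L, A v u * s v * s u) + ∑ u ∈ R, A v u * s v * s u := by
      intro v; exact Finset.sum_union hLR
    simp only [hLsplit]
    rw [Finset.sum_add_distrib, Finset.sum_add_distrib]
    have e1 : (∑ v ∈ L, ∑ u ∈ L, A v u * s v * s u) = 2 * eL := by
      rw [heL]
      have h : ∀ v ∈ L, (∑ u ∈ L, A v u * s v * s u) = ∑ u ∈ L, A v u := by
        intro v hv
        refine Finset.sum_congr rfl fun u hu => ?_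
        rw [hsL v hv, hsL u hu]; ring
      rw [Finset.sum_congr rfl h]; ring
    have e2 : (∑ v ∈ L, ∑ u ∈ R, A v u * s v * s u)
        = -(∑ v ∈ L, ∑ u ∈ R, A v u) := by
      rw [← Finset.sum_neg_distrib]
      refine Finset.sum_congr rfl fun v hv => ?_
      rw [← Finset.sum_neg_distrib]
      refine Finset.sum_congr rfl fun u hu => by rw [hsL v hv, hsR u hu]; ring
    have e3 : (∑ v ∈ R, ∑ u ∈ L, A v u * s v * s u)
        = -(∑ v ∈ L, ∑ u ∈ R, A v u) := by
      rw [← hSLR, ← Finset.sum_neg_distrib]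
      refine Finset.sum_congr rfl fun v hv => ?_
      rw [← Finset.sum_neg_distrib]
      refine Finset.sum_congr rfl fun u hu => by rw [hsR v hv, hsL u hu]; ring
    have e4 : (∑ v ∈ R, ∑ u ∈ R, A v u * s v * s u) = 2 * eR := by
      rw [heR]
      have h : ∀ v ∈ R, (∑ u ∈ R, A v u * s v * s u) = ∑ u ∈ R, A v u := by
        intro v hv
        refine Finset.sum_congr rfl fun u hu => ?_
        rw [hsR v hv, hsR u hu]; ring
      rw [Finset.sum_congr rfl h]; ring
    rw [e1, e2, e3, e4]; ring
  -- volume decomposition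
  have hvol : volU = 2 * eL + 2 * eR + 2 * (∑ v ∈ L, ∑ u ∈ R, A v u) + eOut := by
    have hrow : ∀ v, d v = (∑ u ∈ U, A v u) + ∑ u ∈ Uᶜ, A v u := by
      intro v; rw [hd v, ← Finset.sum_add_sum_compl U]
    calc volU = ∑ v ∈ U, d v := hvolU
      _ = (∑ v ∈ U, ∑ u ∈ U, A v u) + ∑ v ∈ U, ∑ u ∈ Uᶜ, A v u := by
          rw [Finset.sum_congr rfl fun v _ => hrow v, Finset.sum_add_distrib]
      _ = 2 * eL + 2 * eR + 2 * (∑ v ∈ L, ∑ u ∈ R, A v u) + eOut := by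
          rw [← heOut]
          congr 1
          rw [hU, Finset.sum_union hLR]
          have hLsplit : ∀ v, (∑ u ∈ L ∪ R, A v u)
              = (∑ u ∈ L, A v u) + ∑ u ∈ R, A v u := fun v => Finset.sum_union hLR
          simp only [hLsplit]
          rw [Finset.sum_add_distrib, Finset.sum_add_distrib, hSLR, heL, heR]
          ring
  have heOut0 : 0 ≤ eOut := by
    rw [heOut]
    exact Finset.sum_nonneg fun v _ => Finset.sum_nonneg fun u _ => hA0 v u
  have hSfinal : (∑ v, ∑ u, A v u * s v * s u) = 4 * eL + 4 * eR + eOut - volU := by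
    rw [hSval]; linarith [hvol]
  rw [hQ, hsum1, hSfinal]
  have key : (4 * eL + 4 * eR + eOut - volU) / volU ≤ 2 * θ - 1 := by
    have h1 : (4 * eL + 4 * eR + eOut - volU) / volU
        ≤ (4 * eL + 4 * eR + 2 * eOut - volU) / volU :=
      (div_le_div_iff_of_pos_right hvolU0).mpr (by linarith)
    have h2 : (4 * eL + 4 * eR + 2 * eOut - volU) / volU
        = 2 * ((2 * eL + 2 * eR + eOut) / volU) - 1 := by
      field_simp; ring
    linarith [h1, h2.le, hβ]
  linarith [key]
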